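/- In an H-field of well-based series with small derivation, for monomials 𝔪, 𝔫 with 𝔫 ≠ 1: 𝔪 is flatter than 𝔫 if and only if 𝔪† ⪯ 𝔫†, where 𝔪† = 𝔪'/𝔪 is the logarithmic derivative. -/

import Mathlib

/-- `s ≺ t` relative to the coefficient field `R`. -/
def Prec {T : Type*} [Field T] [LinearOrder T] [IsStrictOrderedRing T] (R : Subfield T) (s t : T) : Prop :=
  ∀ r ∈ R, 0 < r → r * |s| < |t|

/-- `s ⪯ t` (dominance) relative to `R`. -/
def Dominated {T : Type*} [Field T] [LinearOrder T] [IsStrictOrderedRing T] (R : Subfield T) (s t : T) : Prop :=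
  ∃ r ∈ R, 0 < r ∧ |s| ≤ r * |t|

/-- `s ≍ t` relative to `R`. -/
def Asymp {T : Type*} [Field T] [LinearOrder T] [IsStrictOrderedRing T] (R : Subfield T) (s t : T) : Prop :=
  Dominated R s t ∧ Dominated R t s

section Aux

variable {T : Type*} [Field T] [LinearOrder T] [IsStrictOrderedRing T] (R : Subfield T) (d : T → T)

lemma d_mem_zero (hd_ker : ∀ a : T, d a = 0 ↔ a ∈ R) {a : T} (ha : a ∈ R) :
    d a = 0 := (hd_ker a).mpr ha

lemma d_neg' (hd_add : ∀ a b : T, d (a + b) = d a + d b)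
    (hd_ker : ∀ a : T, d a = 0 ↔ a ∈ R) (a : T) : d (-a) = - d a := by
  have h0 : d (0 : T) = 0 := d_mem_zero R d hd_ker (zero_mem R)
  have h := hd_add a (-a)
  rw [add_neg_cancel, h0] at h
  linarith

/-- Positive infinite elements have positive derivative. -/
lemma d_pos_of_inf (hH : ∀ f : T, (∀ r : T, r ∈ R → r < f) → 0 < d f)
    (f : T) (h : ∀ r ∈ R, 0 < r → r < f) : 0 < d f := by
  apply hH
  intro r hr
  rcases le_or_gt r 0 with h0 | h0
  · exact lt_of_le_of_lt h0 (lt_trans one_pos (h 1 (one_mem R) one_pos))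
  · exact h r hr h0

/-- Positive infinitesimal elements have negative derivative. -/
lemma d_neg_of_small (hd_mul : ∀ a b : T, d (a * b) = d a * b + a * d b)
    (hd_ker : ∀ a : T, d a = 0 ↔ a ∈ R)
    (hH : ∀ f : T, (∀ r : T, r ∈ R → r < f) → 0 < d f)
    (f : T) (hf : 0 < f) (h : ∀ r ∈ R, 0 < r → r * f < 1) : d f < 0 := by
  have hinv : 0 < d f⁻¹ := by
    apply d_pos_of_inf R d hH
    intro r hr hr0
    have h1 := h r hr hr0
    have h2 : f⁻¹ * f = 1 := inv_mul_cancel₀ hf.ne'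
    nlinarith [inv_pos.mpr hf]
  have h1 : d (f * f⁻¹) = 0 := d_mem_zero R d hd_ker (by
    rw [mul_inv_cancel₀ hf.ne']; exact one_mem R)
  have h2 := hd_mul f f⁻¹
  rw [h1] at h2
  have hfinv : 0 < f⁻¹ := inv_pos.mpr hf
  nlinarith [hinv, hfinv, hf]

/-- Key lemma, positive case: if `|s| ≤ p * t` with `p < q` in `R`, and `t`
is positive infinite or positive infinitesimal, then `|d s| < q * |d t|`. -/
lemma key_pos (hd_add : ∀ a b : T, d (a + b) = d a + d b)
    (hd_mul : ∀ a b : T, d (a * b) = d a * b + a * d b)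
    (hd_ker : ∀ a : T, d a = 0 ↔ a ∈ R)
    (hH : ∀ f : T, (∀ r : T, r ∈ R → r < f) → 0 < d f)
    (s t p q : T) (hpR : p ∈ R) (hqR : q ∈ R) (hp0 : 0 < p) (hpq : p < q)
    (ht0 : 0 < t) (hst : |s| ≤ p * t)
    (ht : (∀ r ∈ R, 0 < r → r < t) ∨ (∀ r ∈ R, 0 < r → r * t < 1)) :
    |d s| < q * |d t| := by
  have hq0 : 0 < q := hp0.trans hpq
  have habs := abs_le.mp hst
  have hlin : ∀ x : T, d (q * t + x) = q * d t + d x := by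
    intro x
    rw [hd_add, hd_mul, d_mem_zero R d hd_ker hqR]
    ring
  have hplus : d (q * t + s) = q * d t + d s := hlin s
  have hminus : d (q * t + (-s)) = q * d t - d s := by
    rw [hlin (-s), d_neg' R d hd_add hd_ker]; ring
  rcases ht with hinf | hsml
  · -- t positive infinite
    have hdt : 0 < d t := d_pos_of_inf R d hH t hinf
    have hbig : ∀ x : T, |x| ≤ p * t → 0 < d (q * t + x) := by
      intro x hx
      apply d_pos_of_inf R d hH
      intro r hrR hr0
      have hmem : r / (q - p) ∈ R := div_mem hrR (sub_mem hqR hpR)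
      have hdiv : 0 < r / (q - p) := div_pos hr0 (by linarith)
      have h1 := hinf _ hmem hdiv
      rw [div_lt_iff₀ (by linarith : (0:T) < q - p)] at h1
      have := (abs_le.mp hx).1
      nlinarith
    have h1 := hbig s hst
    have h2 := hbig (-s) (by rwa [abs_neg])
    rw [hplus] at h1; rw [hminus] at h2
    rw [abs_of_pos hdt, abs_lt]
    constructor <;> nlinarith
  · -- t positive infinitesimal
    have hdt : d t < 0 := d_neg_of_small R d hd_mul hd_ker hH t ht0 hsml
    have hsmall : ∀ x : T, |x| ≤ p * t → d (q * t + x) < 0 := by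
      intro x hx
      have hax := abs_le.mp hx
      apply d_neg_of_small R d hd_mul hd_ker hH
      · nlinarith
      · intro r hrR hr0
        have hmem : r * (q + p) ∈ R := mul_mem hrR (add_mem hqR hpR)
        have hpos : 0 < r * (q + p) := by positivity
        have h1 := hsml _ hmem hpos
        nlinarith
    have h1 := hsmall s hst
    have h2 := hsmall (-s) (by rwa [abs_neg])
    rw [hplus] at h1; rw [hminus] at h2
    rw [abs_of_neg hdt, abs_lt]
    constructor <;> nlinarith
  
/-- Key lemma: if `|s| ≤ p * |t|` with `p < q` in `R`, `t ≠ 0`, and `t` is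
infinite or infinitesimal, then `|d s| < q * |d t|`. -/
lemma key_lem (hd_add : ∀ a b : T, d (a + b) = d a + d b)
    (hd_mul : ∀ a b : T, d (a * b) = d a * b + a * d b)
    (hd_ker : ∀ a : T, d a = 0 ↔ a ∈ R)
    (hH : ∀ f : T, (∀ r : T, r ∈ R → r < f) → 0 < d f)
    (s t p q : T) (hpR : p ∈ R) (hqR : q ∈ R) (hp0 : 0 < p) (hpq : p < q)
    (htne : t ≠ 0) (hst : |s| ≤ p * |t|)
    (ht : (∀ r ∈ R, 0 < r → r < |t|) ∨ (∀ r ∈ R, 0 < r → r * |t| < 1)) :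
    |d s| < q * |d t| := by
  rcases htne.lt_or_gt with h0 | h0
  · have habs : |t| = -t := abs_of_neg h0
    rw [habs] at hst ht
    have := key_pos R d hd_add hd_mul hd_ker hH s (-t) p q hpR hqR hp0 hpq
      (by linarith) hst ht
    rwa [d_neg' R d hd_add hd_ker, abs_neg] at this
  · have habs : |t| = t := abs_of_pos h0
    rw [habs] at hst ht
    exact key_pos R d hd_add hd_mul hd_ker hH s t p q hpR hqR hp0 hpq h0 hst ht

/-- `¬ Asymp R x 1` unfolded: `x` is infinite or infinitesimal. -/
lemma not_asymp_one (x : T) (h : ¬ Asymp R x 1) :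
    (∀ r ∈ R, 0 < r → r < |x|) ∨ (∀ r ∈ R, 0 < r → r * |x| < 1) := by
  rcases not_and_or.mp h with h1 | h1
  · left
    intro r hr hr0
    by_contra hc
    push_neg at hc
    exact h1 ⟨r, hr, hr0, by simpa using hc⟩
  · right
    intro r hr hr0
    by_contra hc
    push_neg at hc
    exact h1 ⟨r, hr, hr0, by simpa using hc⟩

end Aux

/-- in a transserial H-field, for monomials `m, n > 0` with
`n ≠ 1` (monomials have purely infinite logarithms, so `log m = 0` or
`log m ̸≍ 1`, and `log n ̸≍ 1`): `m` is flatter than `n`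
(`log m ⪯ log n`) iff `m† ⪯ n†`, where `u† = u'/u`. -/
theorem flatter_iff_logDeriv_dominated (T : Type*) [Field T] [LinearOrder T] [IsStrictOrderedRing T]
    (R : Subfield T) (d : T → T) (log : T → T)
    (hd_add : ∀ a b : T, d (a + b) = d a + d b)
    (hd_mul : ∀ a b : T, d (a * b) = d a * b + a * d b)
    (hd_ker : ∀ a : T, d a = 0 ↔ a ∈ R)
    (hH : ∀ f : T, (∀ r : T, r ∈ R → r < f) → 0 < d f)
    (hlog_mul : ∀ a b : T, 0 < a → 0 < b → log (a * b) = log a + log b)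
    (hlog_mono : StrictMonoOn log (Set.Ioi (0 : T)))
    (hd_log : ∀ a : T, 0 < a → a * d (log a) = d a)
    (m n : T) (hm : 0 < m) (hn : 0 < n) (hn1 : n ≠ 1)
    (hmlog : log m = 0 ∨ ¬ Asymp R (log m) 1)
    (hnlog : ¬ Asymp R (log n) 1) :
    Dominated R (log m) (log n) ↔ Dominated R (d m / m) (d n / n) := by
  -- logarithmic derivatives
  have hdm : d m / m = d (log m) := by
    rw [div_eq_iff hm.ne']
    linarith [hd_log m hm]
  have hdn : d n / n = d (log n) := by
    rw [div_eq_iff hn.ne']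
    linarith [hd_log n hn]
  rw [hdm, hdn]
  -- log 1 = 0 and log n ≠ 0
  have hlog1 : log (1 : T) = 0 := by
    have := hlog_mul 1 1 one_pos one_pos
    rw [mul_one] at this
    linarith
  have hlogn_ne : log n ≠ 0 := by
    intro hc
    exact hn1 (hlog_mono.injOn (Set.mem_Ioi.mpr hn) (Set.mem_Ioi.mpr one_pos)
      (by rw [hc, hlog1]))
  have htn := not_asymp_one R (log n) hnlog
  constructor
  · -- forward direction
    rintro ⟨r, hrR, hr0, hle⟩
    have hkey := key_lem R d hd_add hd_mul hd_ker hH (log m) (log n) r (r + 1)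
      hrR (add_mem hrR (one_mem R)) hr0 (by linarith) hlogn_ne hle htn
    exact ⟨r + 1, add_mem hrR (one_mem R), by linarith, hkey.le⟩
  · -- backward direction, by contradiction
    rintro ⟨r, hrR, hr0, hle⟩
    by_contra hab
    -- then log n ≺ log m
    have hprec : ∀ c ∈ R, 0 < c → c * |log n| < |log m| := by
      intro c hc hc0
      by_contra hcc
      push_neg at hcc
      exact hab ⟨c, hc, hc0, hcc⟩
    -- log m ≠ 0
    have hlogm_ne : log m ≠ 0 := by
      intro hc
      have h1 := hprec 1 (one_mem R) one_pos
      rw [hc, abs_zero] at h1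
      have : 0 < |log n| := abs_pos.mpr hlogn_ne
      nlinarith
    have hmnot : ¬ Asymp R (log m) 1 := by
      rcases hmlog with h | h
      · exact absurd h hlogm_ne
      · exact h
    have htm := not_asymp_one R (log m) hmnot
    -- |log n| ≤ (1/(4r)) * |log m|, with 1/(4r) < 1/r
    have h4mem : (4 : T) ∈ R := by
      have h1 : (1 : T) ∈ R := one_mem R
      have h := add_mem (add_mem (add_mem h1 h1) h1) h1
      rw [show (1 : T) + 1 + 1 + 1 = 4 by norm_num] at h
      exact h
    have h4r : (4 * r) ∈ R := mul_mem h4mem hrR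
    have h4r0 : 0 < 4 * r := by linarith
    have hsle : |log n| ≤ (4 * r)⁻¹ * |log m| := by
      have := hprec (4 * r) h4r h4r0
      rw [le_inv_mul_iff₀ h4r0]
      linarith
    have hkey := key_lem R d hd_add hd_mul hd_ker hH (log n) (log m)
      (4 * r)⁻¹ r⁻¹ (inv_mem h4r) (inv_mem hrR)
      (by positivity) (by
        rw [inv_lt_inv₀ h4r0 hr0]
        linarith) hlogm_ne hsle htm
    -- contradiction: |d log m| ≤ r * |d log n| and |d log n| < r⁻¹ * |d log m|
    have h1 : r * |d (log n)| < r * (r⁻¹ * |d (log m)|) := by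
      exact mul_lt_mul_of_pos_left hkey hr0
    rw [← mul_assoc, mul_inv_cancel₀ hr0.ne', one_mul] at h1
    linarith
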